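/- Every graph G satisfies t(G) ≤ si(G), where t(G) is the track number: the least d such that G is a d-track interval graph. -/
import Mathlib


/-- `(a, b, L)` is a `d`-simultaneous interval representation of `G`:
each vertex `v` gets a nonempty open interval `(a v, b v)` and a label set
`L v ⊆ {1,…,d}`, and distinct vertices are adjacent iff both their intervals
and their label sets intersect. -/
def IsSIRep {V : Type*} (G : SimpleGraph V) (d : ℕ)
    (a b : V → ℝ) (L : V → Finset (Fin d)) : Prop :=
  (∀ v, a v < b v) ∧
  ∀ u v : V, u ≠ v →
    (G.Adj u v ↔ (Set.Ioo (a u) (b u) ∩ Set.Ioo (a v) (b v)).Nonempty ∧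
      (L u ∩ L v).Nonempty)

/-- The simultaneous interval number of `G`. -/
noncomputable def si {V : Type*} (G : SimpleGraph V) : ℕ :=
  sInf {d | ∃ a b L, IsSIRep G d a b L}

/-- The track number of `G`: the least `d` such that `G` is a `d`-track
interval graph. -/
noncomputable def trackNumber {V : Type*} (G : SimpleGraph V) : ℕ :=
  sInf {d | ∃ a b : Fin d → V → ℝ, (∀ j v, a j v < b j v) ∧
    ∀ u v : V, u ≠ v →
      (G.Adj u v ↔ ∃ j, (Set.Ioo (a j u) (b j u) ∩
        Set.Ioo (a j v) (b j v)).Nonempty)}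

/-- Every finite graph has some simultaneous interval representation. -/
lemma exists_SIRep {V : Type*} [Fintype V] (G : SimpleGraph V) :
    ∃ d a b L, IsSIRep G d a b L := by
  classical
  set d := Fintype.card (V × V) with hd
  set e : Fin d ≃ V × V := (Fintype.equivFin (V × V)).symm with he
  refine ⟨d, fun _ => (0 : ℝ), fun _ => 1,
    fun v => Finset.univ.filter
      (fun i => G.Adj (e i).1 (e i).2 ∧ ((e i).1 = v ∨ (e i).2 = v)), ?_, ?_⟩
  · intro v; norm_num
  · intro u v huv
    constructor
    · intro hadj
      refine ⟨⟨(1:ℝ)/2, by norm_num, by norm_num⟩, ?_⟩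
      refine ⟨e.symm (u, v), ?_⟩
      simp only [Finset.mem_inter, Finset.mem_filter, Finset.mem_univ, true_and,
        Equiv.apply_symm_apply]
      exact ⟨⟨hadj, Or.inl trivial⟩, ⟨hadj, Or.inr trivial⟩⟩
    · rintro ⟨-, ⟨i, hi⟩⟩
      simp only [Finset.mem_inter, Finset.mem_filter, Finset.mem_univ, true_and] at hi
      obtain ⟨⟨hadj, hu⟩, ⟨-, hv⟩⟩ := hi
      rcases hu with hu | hu <;> rcases hv with hv | hv
      · exact absurd (hu ▸ hv : u = v) huv
      · rw [← hu, ← hv]; exact hadj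
      · rw [← hu, ← hv]; exact hadj.symm
      · exact absurd (hu ▸ hv : u = v) huv

/-- From a simultaneous interval representation one gets a `d`-track representation. -/
lemma track_of_SIRep {V : Type*} [Fintype V] (G : SimpleGraph V) (d : ℕ)
    (a b : V → ℝ) (L : V → Finset (Fin d)) (h : IsSIRep G d a b L) :
    ∃ a' b' : Fin d → V → ℝ, (∀ j v, a' j v < b' j v) ∧
      ∀ u v : V, u ≠ v →
        (G.Adj u v ↔ ∃ j, (Set.Ioo (a' j u) (b' j u) ∩
          Set.Ioo (a' j v) (b' j v)).Nonempty) := by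
  classical
  obtain ⟨hab, hiff⟩ := h
  set M : ℝ := ⨆ v, b v with hM
  have hbM : ∀ v, b v ≤ M := fun v =>
    le_ciSup (Set.Finite.bddAbove (Set.finite_range b)) v
  set f : V → ℝ := fun v => M + 1 + (Fintype.equivFin V v : ℕ) with hf
  have hfM : ∀ v, M < f v := by
    intro v
    have : (0:ℝ) ≤ ((Fintype.equivFin V v : ℕ) : ℝ) := Nat.cast_nonneg _
    simp only [hf]; linarith
  have hfsep : ∀ u v : V, u ≠ v → f v + 1/2 ≤ f u ∨ f u + 1/2 ≤ f v := by
    intro u v huv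
    have hne : (Fintype.equivFin V u : ℕ) ≠ (Fintype.equivFin V v : ℕ) := by
      intro hcon
      exact huv ((Fintype.equivFin V).injective (Fin.ext hcon))
    rcases lt_or_gt_of_ne hne with hlt | hlt
    · right
      have : ((Fintype.equivFin V u : ℕ) : ℝ) + 1 ≤ (Fintype.equivFin V v : ℕ) := by
        exact_mod_cast hlt
      simp only [hf]; linarith
    · left
      have : ((Fintype.equivFin V v : ℕ) : ℝ) + 1 ≤ (Fintype.equivFin V u : ℕ) := by
        exact_mod_cast hlt
      simp only [hf]; linarith
  clear_value f
  clear_value M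
  refine ⟨fun j v => if j ∈ L v then a v else f v,
          fun j v => if j ∈ L v then b v else f v + 1/2, ?_, ?_⟩
  · intro j v
    by_cases hj : j ∈ L v <;> simp [hj, hab v]
  · intro u v huv
    rw [hiff u v huv]
    constructor
    · rintro ⟨hI, ⟨j, hj⟩⟩
      rw [Finset.mem_inter] at hj
      exact ⟨j, by simpa [hj.1, hj.2] using hI⟩
    · rintro ⟨j, x, hxu, hxv⟩
      by_cases hju : j ∈ L u <;> by_cases hjv : j ∈ L v
      · simp only [hju, hjv, if_pos] at hxu hxv
        exact ⟨⟨x, hxu, hxv⟩, ⟨j, Finset.mem_inter.2 ⟨hju, hjv⟩⟩⟩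
      · -- u labeled, v unlabeled: x < b u ≤ M < f v < x, contradiction
        simp only [hju, hjv, if_pos, if_neg, not_false_iff] at hxu hxv
        exfalso
        have h1 := hxu.2; have h2 := hxv.1; have h3 := hbM u; have h4 := hfM v
        linarith
      · simp only [hju, hjv, if_pos, if_neg, not_false_iff] at hxu hxv
        exfalso
        have h1 := hxv.2; have h2 := hxu.1; have h3 := hbM v; have h4 := hfM u
        linarith
      · simp only [hju, hjv, if_neg, not_false_iff] at hxu hxv
        rcases hfsep u v huv with hle | hle
        · exfalso
          have h1 := hxu.1; have h2 := hxv.2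
          linarith
        · exfalso
          have h1 := hxv.1; have h2 := hxu.2
          linarith

/-- Every graph satisfies `t(G) ≤ si(G)`. -/
theorem trackNumber_le_si {V : Type*} [Fintype V] (G : SimpleGraph V) :
    trackNumber G ≤ si G := by
  have hne : {d | ∃ a b L, IsSIRep G d a b L}.Nonempty := by
    obtain ⟨d, a, b, L, h⟩ := exists_SIRep G
    exact ⟨d, a, b, L, h⟩
  have hmem : si G ∈ {d | ∃ a b L, IsSIRep G d a b L} := Nat.sInf_mem hne
  obtain ⟨a, b, L, h⟩ := hmem
  have := track_of_SIRep G (si G) a b L h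
  exact Nat.sInf_le this
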